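/- arXiv:1305.4288 — 2 statements merged into one kernel-verified Lean document; each statement's English description precedes it below -/
import Mathlib

section
/- Let D consist of upwards closed dependencies and let φ₁, φ₂ be FO(D)-formulas. Then φ₁ ∨ φ₂ is logically equivalent (satisfied by exactly the same model-team pairs) to (φ₁ᶠ ∨ φ₂ᶠ) ∧ (φ₁ ↾ φ₁ᶠ) ∧ (φ₂ ↾ φ₂ᶠ). -/
/-- Formulas of first-order logic with team semantics, in negation normal form,
over a relational signature `σ` (with arities `ar`) extended with dependency
atoms indexed by `δ` (with arities `dar`).  Equality and inequality literals
are between tuples of variables; variables are natural numbers. -/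
inductive TForm (σ : Type) (ar : σ → ℕ) (δ : Type) (dar : δ → ℕ) : Type
  | rel (r : σ) (ts : Fin (ar r) → ℕ)
  | nrel (r : σ) (ts : Fin (ar r) → ℕ)
  | eq (k : ℕ) (x y : Fin k → ℕ)
  | neq (k : ℕ) (x y : Fin k → ℕ)
  | dep (d : δ) (xs : Fin (dar d) → ℕ)
  | and (φ ψ : TForm σ ar δ dar)
  | or (φ ψ : TForm σ ar δ dar)
  | ex (v : ℕ) (φ : TForm σ ar δ dar)
  | all (v : ℕ) (φ : TForm σ ar δ dar)

/-- A team over a model with carrier `M`: a set of assignments. -/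
abbrev Team (M : Type) := Set (ℕ → M)

/-- `X(x̄)`: the relation of values of the tuple `x̄` in the team `X`. -/
def Team.rel {M : Type} (X : Team M) {k : ℕ} (xs : Fin k → ℕ) : Set (Fin k → M) :=
  {t | ∃ s ∈ X, t = fun i => s (xs i)}

/-- An interpretation of a family of dependencies: for each index, an
isomorphism-invariant-style class of pairs (carrier, relation). -/
abbrev DepFam (δ : Type) (dar : δ → ℕ) := ∀ d : δ, ∀ M : Type, Set (Fin (dar d) → M) → Prop

/-- Lax team semantics. -/
def tsat {σ : Type} {ar : σ → ℕ} {δ : Type} {dar : δ → ℕ} {M : Type}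
    (RI : ∀ r : σ, Set (Fin (ar r) → M)) (DI : DepFam δ dar) :
    TForm σ ar δ dar → Team M → Prop
  | .rel r ts, X => ∀ s ∈ X, (fun i => s (ts i)) ∈ RI r
  | .nrel r ts, X => ∀ s ∈ X, (fun i => s (ts i)) ∉ RI r
  | .eq _ x y, X => ∀ s ∈ X, (fun i => s (x i)) = fun i => s (y i)
  | .neq _ x y, X => ∀ s ∈ X, (fun i => s (x i)) ≠ fun i => s (y i)
  | .dep d xs, X => DI d M (X.rel xs)
  | .and φ ψ, X => tsat RI DI φ X ∧ tsat RI DI ψ X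
  | .or φ ψ, X => ∃ Y Z, X = Y ∪ Z ∧ tsat RI DI φ Y ∧ tsat RI DI ψ Z
  | .ex v φ, X => ∃ H : (ℕ → M) → Set M, (∀ s ∈ X, (H s).Nonempty) ∧
      tsat RI DI φ {s' | ∃ s ∈ X, ∃ m ∈ H s, s' = Function.update s v m}
  | .all v φ, X => tsat RI DI φ {s' | ∃ s ∈ X, ∃ m : M, s' = Function.update s v m}

/-- Tarski (single-assignment) semantics; dependency atoms are treated as
trivially true (they are only meaningful for first-order formulas). -/
def ssat {σ : Type} {ar : σ → ℕ} {δ : Type} {dar : δ → ℕ} {M : Type}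
    (RI : ∀ r : σ, Set (Fin (ar r) → M)) :
    TForm σ ar δ dar → (ℕ → M) → Prop
  | .rel r ts, s => (fun i => s (ts i)) ∈ RI r
  | .nrel r ts, s => (fun i => s (ts i)) ∉ RI r
  | .eq _ x y, s => (fun i => s (x i)) = fun i => s (y i)
  | .neq _ x y, s => (fun i => s (x i)) ≠ fun i => s (y i)
  | .dep _ _, _ => True
  | .and φ ψ, s => ssat RI φ s ∧ ssat RI ψ s
  | .or φ ψ, s => ssat RI φ s ∨ ssat RI ψ s
  | .ex v φ, s => ∃ m : M, ssat RI φ (Function.update s v m)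
  | .all v φ, s => ∀ m : M, ssat RI φ (Function.update s v m)

/-- A formula is first-order if it contains no dependency atoms. -/
def TForm.isFO {σ : Type} {ar : σ → ℕ} {δ : Type} {dar : δ → ℕ} :
    TForm σ ar δ dar → Prop
  | .dep _ _ => False
  | .and φ ψ => φ.isFO ∧ ψ.isFO
  | .or φ ψ => φ.isFO ∧ ψ.isFO
  | .ex _ φ => φ.isFO
  | .all _ φ => φ.isFO
  | _ => True

/-- Free variables of a formula. -/
def TForm.free {σ : Type} {ar : σ → ℕ} {δ : Type} {dar : δ → ℕ} :
    TForm σ ar δ dar → Set ℕ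
  | .rel _ ts => Set.range ts
  | .nrel _ ts => Set.range ts
  | .eq _ x y => Set.range x ∪ Set.range y
  | .neq _ x y => Set.range x ∪ Set.range y
  | .dep _ xs => Set.range xs
  | .and φ ψ => φ.free ∪ ψ.free
  | .or φ ψ => φ.free ∪ ψ.free
  | .ex v φ => φ.free \ {v}
  | .all v φ => φ.free \ {v}

/-- The flattening `φᶠ`: replace every dependency atom by the trivially true
atom `⊤` (here rendered as the empty-tuple equality). -/
def TForm.flatten {σ : Type} {ar : σ → ℕ} {δ : Type} {dar : δ → ℕ} :
    TForm σ ar δ dar → TForm σ ar δ dar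
  | .dep _ _ => .eq 0 Fin.elim0 Fin.elim0
  | .and φ ψ => .and φ.flatten ψ.flatten
  | .or φ ψ => .or φ.flatten ψ.flatten
  | .ex v φ => .ex v φ.flatten
  | .all v φ => .all v φ.flatten
  | φ => φ

/-- Negation normal form of the negation of a (first-order) formula. -/
def TForm.neg {σ : Type} {ar : σ → ℕ} {δ : Type} {dar : δ → ℕ} :
    TForm σ ar δ dar → TForm σ ar δ dar
  | .rel r ts => .nrel r ts
  | .nrel r ts => .rel r ts
  | .eq k x y => .neq k x y
  | .neq k x y => .eq k x y
  | .dep d xs => .dep d xs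
  | .and φ ψ => .or φ.neg ψ.neg
  | .or φ ψ => .and φ.neg ψ.neg
  | .ex v φ => .all v φ.neg
  | .all v φ => .ex v φ.neg

/-- `(ψ ↾ θ) := (¬θ) ∨ (θ ∧ ψ)`. -/
def TForm.restrict {σ : Type} {ar : σ → ℕ} {δ : Type} {dar : δ → ℕ}
    (ψ θ : TForm σ ar δ dar) : TForm σ ar δ dar :=
  .or θ.neg (.and θ ψ)

/-- A family of dependencies is upwards closed. -/
def UpClosed {δ : Type} {dar : δ → ℕ} (DI : DepFam δ dar) : Prop :=
  ∀ (d : δ) (M : Type) (R S : Set (Fin (dar d) → M)), R ⊆ S → DI d M R → DI d M S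

/-- The constancy dependency of arity `n`. -/
def ConstD (n : ℕ) : ∀ M : Type, Set (Fin n → M) → Prop :=
  fun _ R => ∀ t ∈ R, ∀ t' ∈ R, t = t'

section AuxOrClean

variable {σ : Type} {ar : σ → ℕ} {δ : Type} {dar : δ → ℕ} {M : Type}
variable (RI : ∀ r : σ, Set (Fin (ar r) → M)) (DI : DepFam δ dar)

lemma tsat_pointwise (φ : TForm σ ar δ dar) :
    ∀ X : Team M, tsat RI DI φ X → ∀ s ∈ X, ssat RI φ s := by
  induction φ with
  | rel r ts => intro X h s hs; exact h s hs
  | nrel r ts => intro X h s hs; exact h s hs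
  | eq k x y => intro X h s hs; exact h s hs
  | neq k x y => intro X h s hs; exact h s hs
  | dep d xs => intro X h s hs; trivial
  | and φ ψ ih1 ih2 =>
      intro X h s hs; exact ⟨ih1 X h.1 s hs, ih2 X h.2 s hs⟩
  | or φ ψ ih1 ih2 =>
      rintro X ⟨Y, Z, rfl, hY, hZ⟩ s hs
      rcases hs with hs | hs
      · exact Or.inl (ih1 Y hY s hs)
      · exact Or.inr (ih2 Z hZ s hs)
  | ex v φ ih =>
      rintro X ⟨H, hne, hsat⟩ s hs
      obtain ⟨m, hm⟩ := hne s hs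
      exact ⟨m, ih _ hsat _ ⟨s, hs, m, hm, rfl⟩⟩
  | all v φ ih =>
      intro X h s hs m
      exact ih _ h _ ⟨s, hs, m, rfl⟩

lemma ssat_tsat (φ : TForm σ ar δ dar) (hFO : φ.isFO) :
    ∀ X : Team M, (∀ s ∈ X, ssat RI φ s) → tsat RI DI φ X := by
  induction φ with
  | rel r ts => intro X h; exact h
  | nrel r ts => intro X h; exact h
  | eq k x y => intro X h; exact h
  | neq k x y => intro X h; exact h
  | dep d xs => exact absurd hFO (by simp [TForm.isFO])
  | and φ ψ ih1 ih2 =>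
      intro X h
      exact ⟨ih1 hFO.1 X (fun s hs => (h s hs).1), ih2 hFO.2 X (fun s hs => (h s hs).2)⟩
  | or φ ψ ih1 ih2 =>
      intro X h
      refine ⟨{s ∈ X | ssat RI φ s}, {s ∈ X | ssat RI ψ s}, ?_, ?_, ?_⟩
      · ext s
        constructor
        · rintro hs
          rcases h s hs with h' | h'
          · exact Or.inl ⟨hs, h'⟩
          · exact Or.inr ⟨hs, h'⟩
        · rintro (⟨hs, _⟩ | ⟨hs, _⟩) <;> exact hs
      · exact ih1 hFO.1 _ (fun s hs => hs.2)
      · exact ih2 hFO.2 _ (fun s hs => hs.2)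
  | ex v φ ih =>
      intro X h
      refine ⟨fun s => {m | ssat RI φ (Function.update s v m)}, fun s hs => h s hs, ?_⟩
      apply ih hFO
      rintro s' ⟨s, hs, m, hm, rfl⟩
      exact hm
  | all v φ ih =>
      intro X h
      apply ih hFO
      rintro s' ⟨s, hs, m, rfl⟩
      exact h s hs m

lemma flatten_isFO (φ : TForm σ ar δ dar) : φ.flatten.isFO := by
  induction φ <;> simp [TForm.flatten, TForm.isFO, *]

lemma neg_isFO (φ : TForm σ ar δ dar) (h : φ.isFO) : φ.neg.isFO := by
  induction φ <;> simp_all [TForm.neg, TForm.isFO]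

lemma ssat_flatten (φ : TForm σ ar δ dar) :
    ∀ s : ℕ → M, ssat RI φ.flatten s ↔ ssat RI φ s := by
  induction φ with
  | rel r ts => intro s; rfl
  | nrel r ts => intro s; rfl
  | eq k x y => intro s; rfl
  | neq k x y => intro s; rfl
  | dep d xs =>
      intro s
      simp [TForm.flatten, ssat]
  | and φ ψ ih1 ih2 =>
      intro s
      simp only [TForm.flatten, ssat, ih1, ih2]
  | or φ ψ ih1 ih2 =>
      intro s
      simp only [TForm.flatten, ssat, ih1, ih2]
  | ex v φ ih =>
      intro s
      simp only [TForm.flatten, ssat, ih]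
  | all v φ ih =>
      intro s
      simp only [TForm.flatten, ssat, ih]

lemma ssat_neg (φ : TForm σ ar δ dar) (hFO : φ.isFO) :
    ∀ s : ℕ → M, ssat RI φ.neg s ↔ ¬ ssat RI φ s := by
  induction φ with
  | rel r ts => intro s; simp [TForm.neg, ssat]
  | nrel r ts => intro s; simp [TForm.neg, ssat]
  | eq k x y => intro s; simp [TForm.neg, ssat]
  | neq k x y => intro s; simp [TForm.neg, ssat]
  | dep d xs => exact absurd hFO (by simp [TForm.isFO])
  | and φ ψ ih1 ih2 =>
      intro s
      simp only [TForm.neg, ssat, ih1 hFO.1, ih2 hFO.2]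
      tauto
  | or φ ψ ih1 ih2 =>
      intro s
      simp only [TForm.neg, ssat, ih1 hFO.1, ih2 hFO.2]
      tauto
  | ex v φ ih =>
      intro s
      simp only [TForm.neg, ssat, ih hFO]
      push_neg
      rfl
  | all v φ ih =>
      intro s
      simp only [TForm.neg, ssat, ih hFO]
      push_neg
      rfl

lemma tsat_up (hup : UpClosed DI) (φ : TForm σ ar δ dar) :
    ∀ X Y : Team M, Y ⊆ X → tsat RI DI φ Y → (∀ s ∈ X, ssat RI φ s) →
      tsat RI DI φ X := by
  induction φ with
  | rel r ts => intro X Y _ _ h; exact h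
  | nrel r ts => intro X Y _ _ h; exact h
  | eq k x y => intro X Y _ _ h; exact h
  | neq k x y => intro X Y _ _ h; exact h
  | dep d xs =>
      intro X Y hYX hY _
      refine hup d M _ _ ?_ hY
      rintro t ⟨s, hs, rfl⟩
      exact ⟨s, hYX hs, rfl⟩
  | and φ ψ ih1 ih2 =>
      intro X Y hYX hY h
      exact ⟨ih1 X Y hYX hY.1 (fun s hs => (h s hs).1),
             ih2 X Y hYX hY.2 (fun s hs => (h s hs).2)⟩
  | or φ ψ ih1 ih2 =>
      rintro X Y hYX ⟨Y1, Y2, rfl, hY1, hY2⟩ h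
      refine ⟨Y1 ∪ {s ∈ X | ssat RI φ s}, Y2 ∪ {s ∈ X | ssat RI ψ s}, ?_, ?_, ?_⟩
      · apply Set.Subset.antisymm
        · intro s hs
          rcases h s hs with h' | h'
          · exact Or.inl (Or.inr ⟨hs, h'⟩)
          · exact Or.inr (Or.inr ⟨hs, h'⟩)
        · rintro s ((hs | ⟨hs, _⟩) | (hs | ⟨hs, _⟩))
          · exact hYX (Or.inl hs)
          · exact hs
          · exact hYX (Or.inr hs)
          · exact hs
      · refine ih1 _ Y1 (fun s hs => Or.inl hs) hY1 ?_
        rintro s (hs | ⟨_, hs⟩)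
        · exact tsat_pointwise RI DI φ Y1 hY1 s hs
        · exact hs
      · refine ih2 _ Y2 (fun s hs => Or.inl hs) hY2 ?_
        rintro s (hs | ⟨_, hs⟩)
        · exact tsat_pointwise RI DI ψ Y2 hY2 s hs
        · exact hs
  | ex v φ ih =>
      rintro X Y hYX ⟨H, hne, hsat⟩ h
      refine ⟨fun s => {m ∈ H s | s ∈ Y} ∪ {m | ssat RI φ (Function.update s v m)},
        ?_, ?_⟩
      · intro s hs
        obtain ⟨m, hm⟩ := h s hs
        exact ⟨m, Or.inr hm⟩
      · refine ih _ {s' | ∃ s ∈ Y, ∃ m ∈ H s, s' = Function.update s v m} ?_ hsat ?_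
        · rintro s' ⟨s, hs, m, hm, rfl⟩
          exact ⟨s, hYX hs, m, Or.inl ⟨hm, hs⟩, rfl⟩
        · rintro s' ⟨s, hs, m, (⟨hm, hsY⟩ | hm), rfl⟩
          · exact tsat_pointwise RI DI φ _ hsat _ ⟨s, hsY, m, hm, rfl⟩
          · exact hm
  | all v φ ih =>
      intro X Y hYX hY h
      refine ih _ {s' | ∃ s ∈ Y, ∃ m : M, s' = Function.update s v m} ?_ hY ?_
      · rintro s' ⟨s, hs, m, rfl⟩
        exact ⟨s, hYX hs, m, rfl⟩
      · rintro s' ⟨s, hs, m, rfl⟩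
        exact h s hs m

end AuxOrClean

/-- **Disjunction elimination for upwards closed dependencies.**
`φ₁ ∨ φ₂ ≡ (φ₁ᶠ ∨ φ₂ᶠ) ∧ (φ₁ ↾ φ₁ᶠ) ∧ (φ₂ ↾ φ₂ᶠ)`. -/
theorem or_clean {σ : Type} {ar : σ → ℕ} {δ : Type} {dar : δ → ℕ} {M : Type}
    (RI : ∀ r : σ, Set (Fin (ar r) → M)) (DI : DepFam δ dar) (hup : UpClosed DI)
    (φ₁ φ₂ : TForm σ ar δ dar) (X : Team M) :
    tsat RI DI (.or φ₁ φ₂) X ↔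
      tsat RI DI (.and (.or φ₁.flatten φ₂.flatten)
        (.and (φ₁.restrict φ₁.flatten) (φ₂.restrict φ₂.flatten))) X := by
  classical
  constructor
  · rintro ⟨Y, Z, rfl, hY, hZ⟩
    have hYp : ∀ s ∈ Y, ssat RI φ₁ s := tsat_pointwise RI DI φ₁ Y hY
    have hZp : ∀ s ∈ Z, ssat RI φ₂ s := tsat_pointwise RI DI φ₂ Z hZ
    refine ⟨⟨Y, Z, rfl, ?_, ?_⟩, ?_, ?_⟩
    · exact ssat_tsat RI DI _ (flatten_isFO _) Y
        (fun s hs => (ssat_flatten RI φ₁ s).mpr (hYp s hs))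
    · exact ssat_tsat RI DI _ (flatten_isFO _) Z
        (fun s hs => (ssat_flatten RI φ₂ s).mpr (hZp s hs))
    · refine ⟨{s ∈ Y ∪ Z | ¬ ssat RI φ₁ s}, {s ∈ Y ∪ Z | ssat RI φ₁ s},
        ?_, ?_, ?_, ?_⟩
      · apply Set.Subset.antisymm
        · intro s hs
          by_cases h : ssat RI φ₁ s
          · exact Or.inr ⟨hs, h⟩
          · exact Or.inl ⟨hs, h⟩
        · rintro s (⟨hs, _⟩ | ⟨hs, _⟩) <;> exact hs
      · refine ssat_tsat RI DI _ (neg_isFO _ (flatten_isFO _)) _ ?_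
        intro s hs
        exact (ssat_neg RI _ (flatten_isFO _) s).mpr
          (fun h => hs.2 ((ssat_flatten RI φ₁ s).mp h))
      · exact ssat_tsat RI DI _ (flatten_isFO _) _
          (fun s hs => (ssat_flatten RI φ₁ s).mpr hs.2)
      · exact tsat_up RI DI hup φ₁ _ Y
          (fun s hs => ⟨Or.inl hs, hYp s hs⟩) hY (fun s hs => hs.2)
    · refine ⟨{s ∈ Y ∪ Z | ¬ ssat RI φ₂ s}, {s ∈ Y ∪ Z | ssat RI φ₂ s},
        ?_, ?_, ?_, ?_⟩
      · apply Set.Subset.antisymm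
        · intro s hs
          by_cases h : ssat RI φ₂ s
          · exact Or.inr ⟨hs, h⟩
          · exact Or.inl ⟨hs, h⟩
        · rintro s (⟨hs, _⟩ | ⟨hs, _⟩) <;> exact hs
      · refine ssat_tsat RI DI _ (neg_isFO _ (flatten_isFO _)) _ ?_
        intro s hs
        exact (ssat_neg RI _ (flatten_isFO _) s).mpr
          (fun h => hs.2 ((ssat_flatten RI φ₂ s).mp h))
      · exact ssat_tsat RI DI _ (flatten_isFO _) _
          (fun s hs => (ssat_flatten RI φ₂ s).mpr hs.2)
      · exact tsat_up RI DI hup φ₂ _ Z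
          (fun s hs => ⟨Or.inr hs, hZp s hs⟩) hZ (fun s hs => hs.2)
  · rintro ⟨⟨Y, Z, hX, hY, hZ⟩, ⟨A1, B1, hX1, hA1, hB1f, hB1⟩,
      ⟨A2, B2, hX2, hA2, hB2f, hB2⟩⟩
    refine ⟨{s ∈ X | ssat RI φ₁ s}, {s ∈ X | ssat RI φ₂ s}, ?_, ?_, ?_⟩
    · apply Set.Subset.antisymm
      · intro s hs
        have hs' : s ∈ Y ∪ Z := hX ▸ hs
        rcases hs' with h | h
        · exact Or.inl ⟨hs, (ssat_flatten RI φ₁ s).mp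
            (tsat_pointwise RI DI _ Y hY s h)⟩
        · exact Or.inr ⟨hs, (ssat_flatten RI φ₂ s).mp
            (tsat_pointwise RI DI _ Z hZ s h)⟩
      · rintro s (⟨hs, _⟩ | ⟨hs, _⟩) <;> exact hs
    · refine tsat_up RI DI hup φ₁ _ B1 ?_ hB1 (fun s hs => hs.2)
      intro s hs
      exact ⟨hX1 ▸ Or.inr hs, tsat_pointwise RI DI φ₁ B1 hB1 s hs⟩
    · refine tsat_up RI DI hup φ₂ _ B2 ?_ hB2 (fun s hs => hs.2)
      intro s hs
      exact ⟨hX2 ▸ Or.inr hs, tsat_pointwise RI DI φ₂ B2 hB2 s hs⟩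
end

section
/- The negated conditional independence atom x̄ ⊥̸_z̄ ȳ, with semantics: M ⊨_X x̄ ⊥̸_z̄ ȳ iff there exist s, s' ∈ X with s(z̄) = s'(z̄) such that no s'' ∈ X has both s''(x̄z̄) = s(x̄z̄) and s''(ȳz̄) = s'(ȳz̄), is logically equivalent to ∃p̄ q̄ r̄ (=(p̄q̄r̄) ∧ ◇(p̄r̄ = x̄z̄) ∧ ◇(q̄r̄ = ȳz̄) ∧ p̄q̄r̄ ≠ x̄ȳz̄), assuming models have at least two elements. -/
/-- Iterated existential quantification (outermost quantifier is `v 0`). -/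
def TForm.exs {σ : Type} {ar : σ → ℕ} {δ : Type} {dar : δ → ℕ} :
    {n : ℕ} → (Fin n → ℕ) → TForm σ ar δ dar → TForm σ ar δ dar
  | 0, _, φ => φ
  | _ + 1, v, φ => .ex (v 0) (TForm.exs (fun i => v i.succ) φ)

/-- The intersection dependency `◇(v̄ = w̄)` of arity `k + k`. -/
def IntersectD (k : ℕ) : ∀ M : Type, Set (Fin (k + k) → M) → Prop :=
  fun _ R => ∃ t ∈ R, (fun i : Fin k => t (Fin.castAdd k i)) = fun i => t (Fin.natAdd k i)

section Helpers

variable {σ : Type} {ar : σ → ℕ} {δ : Type} {dar : δ → ℕ} {M : Type}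

/-- Simultaneous update of an assignment on a tuple of variables. -/
noncomputable def updT {n : ℕ} (v : Fin n → ℕ) (t : Fin n → M) (s : ℕ → M) : ℕ → M :=
  fun w => if h : ∃ i, v i = w then t h.choose else s w

lemma updT_v {n : ℕ} {v : Fin n → ℕ} (hv : Function.Injective v) (t : Fin n → M)
    (s : ℕ → M) (i : Fin n) : updT v t s (v i) = t i := by
  unfold updT
  have h : ∃ j, v j = v i := ⟨i, rfl⟩
  rw [dif_pos h]
  exact congrArg t (hv h.choose_spec)

lemma updT_not {n : ℕ} {v : Fin n → ℕ} (t : Fin n → M) (s : ℕ → M) {w : ℕ}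
    (hw : ∀ i, v i ≠ w) : updT v t s w = s w :=
  dif_neg (by rintro ⟨i, rfl⟩; exact hw i rfl)

lemma updT_succ {n : ℕ} {v : Fin (n + 1) → ℕ} (hv : Function.Injective v)
    (t : Fin (n + 1) → M) (s : ℕ → M) :
    updT (fun i : Fin n => v i.succ) (fun i => t i.succ)
      (Function.update s (v 0) (t 0)) = updT v t s := by
  funext w
  by_cases h : ∃ i : Fin (n + 1), v i = w
  · obtain ⟨i, rfl⟩ := h
    rw [updT_v hv]
    induction i using Fin.cases with
    | zero =>
      rw [updT_not]
      · simp
      · intro j hj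
        exact Fin.succ_ne_zero j (hv hj)
    | succ j =>
      rw [updT_v (fun i₁ i₂ hi => Fin.succ_injective _ (hv hi))]
  · have h0 : v 0 ≠ w := fun hw => h ⟨0, hw⟩
    rw [updT_not (hw := fun j hj => h ⟨j.succ, hj⟩),
      updT_not (hw := fun i hi => h ⟨i, hi⟩),
      Function.update_of_ne (Ne.symm h0)]

lemma exs_intro (RI : ∀ r : σ, Set (Fin (ar r) → M)) (DI : DepFam δ dar) :
    ∀ {n : ℕ} (v : Fin n → ℕ), Function.Injective v → ∀ (t : Fin n → M)
    (φ : TForm σ ar δ dar) (X : Team M),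
    tsat RI DI φ {s' | ∃ s ∈ X, s' = updT v t s} →
    tsat RI DI (TForm.exs v φ) X := by
  intro n
  induction n with
  | zero =>
    intro v hv t φ X h
    have he : {s' | ∃ s ∈ X, s' = updT v t s} = X := by
      ext s'
      constructor
      · rintro ⟨s, hs, rfl⟩
        have : updT v t s = s := by
          funext w; exact updT_not t s (fun i => i.elim0)
        rwa [this]
      · intro hs'
        exact ⟨s', hs', by funext w; exact (updT_not t s' (fun i => i.elim0)).symm⟩
    rw [he] at h
    exact h
  | succ n ih =>
    intro v hv t φ X h
    show ∃ H : (ℕ → M) → Set M, _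
    refine ⟨fun _ => {t 0}, fun s _ => ⟨t 0, rfl⟩, ?_⟩
    apply ih (fun i => v i.succ) (fun i₁ i₂ hi => Fin.succ_injective _ (hv hi))
      (fun i => t i.succ)
    have he : {s' | ∃ s1 ∈ {s' | ∃ s ∈ X, ∃ m ∈ ({t 0} : Set M),
          s' = Function.update s (v 0) m},
        s' = updT (fun i : Fin n => v i.succ) (fun i => t i.succ) s1} =
        {s' | ∃ s ∈ X, s' = updT v t s} := by
      ext s'
      constructor
      · rintro ⟨s1, ⟨s, hs, m, hm, rfl⟩, rfl⟩
        rcases hm with rfl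
        exact ⟨s, hs, updT_succ hv t s⟩
      · rintro ⟨s, hs, rfl⟩
        exact ⟨Function.update s (v 0) (t 0), ⟨s, hs, t 0, rfl, rfl⟩, (updT_succ hv t s).symm⟩
    rw [he]
    exact h

lemma exs_elim (RI : ∀ r : σ, Set (Fin (ar r) → M)) (DI : DepFam δ dar) :
    ∀ {n : ℕ} (v : Fin n → ℕ) (φ : TForm σ ar δ dar) (X : Team M),
    tsat RI DI (TForm.exs v φ) X →
    ∃ Y : Team M, tsat RI DI φ Y ∧
      (∀ e ∈ Y, ∃ s ∈ X, ∀ w, (∀ i, v i ≠ w) → e w = s w) ∧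
      (∀ s ∈ X, ∃ e ∈ Y, ∀ w, (∀ i, v i ≠ w) → e w = s w) := by
  intro n
  induction n with
  | zero =>
    intro v φ X h
    exact ⟨X, h, fun e he => ⟨e, he, fun _ _ => rfl⟩, fun s hs => ⟨s, hs, fun _ _ => rfl⟩⟩
  | succ n ih =>
    intro v φ X h
    obtain ⟨H, hne, hsat⟩ := h
    obtain ⟨Y, hY, h1, h2⟩ := ih (fun i => v i.succ) φ _ hsat
    refine ⟨Y, hY, ?_, ?_⟩
    · intro e he
      obtain ⟨s1, hs1, hagree⟩ := h1 e he
      obtain ⟨s, hs, m, _, rfl⟩ := hs1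
      refine ⟨s, hs, fun w hw => ?_⟩
      rw [hagree w (fun i hi => hw i.succ hi),
        Function.update_of_ne (fun h' => hw 0 h'.symm)]
    · intro s hs
      obtain ⟨m, hm⟩ := hne s hs
      obtain ⟨e, he, hagree⟩ := h2 (Function.update s (v 0) m) ⟨s, hs, m, hm, rfl⟩
      refine ⟨e, he, fun w hw => ?_⟩
      rw [hagree w (fun i hi => hw i.succ hi),
        Function.update_of_ne (fun h' => hw 0 h'.symm)]

end Helpers

/-- **Definability of negated conditional independence.**  Over models with at
least two elements, `x̄ ⊥̸_z̄ ȳ` is logically equivalent to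
`∃p̄q̄r̄ (=(p̄q̄r̄) ∧ ◇(p̄r̄ = x̄z̄) ∧ ◇(q̄r̄ = ȳz̄) ∧ p̄q̄r̄ ≠ x̄ȳz̄)` for fresh
distinct variables `p̄q̄r̄`.  Dependencies are indexed by `Option Bool`: `none`
is the constancy atom of arity `a+(b+c)`, `some false` and `some true` the
intersection atoms of arities `(a+c)+(a+c)` and `(b+c)+(b+c)`. -/
theorem neg_cond_independence_def {σ : Type} {ar : σ → ℕ} {M : Type} [Nontrivial M]
    (RI : ∀ r : σ, Set (Fin (ar r) → M))
    {a b c : ℕ} (x p : Fin a → ℕ) (y q : Fin b → ℕ) (z r : Fin c → ℕ)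
    (hinj : Function.Injective (Fin.append p (Fin.append q r)))
    (hfx : ∀ i j, Fin.append p (Fin.append q r) i ≠ x j)
    (hfy : ∀ i j, Fin.append p (Fin.append q r) i ≠ y j)
    (hfz : ∀ i j, Fin.append p (Fin.append q r) i ≠ z j)
    (X : Team M) :
    (∃ s ∈ X, ∃ s' ∈ X, (fun i => s (z i)) = (fun i => s' (z i)) ∧
      ∀ s'' ∈ X, ¬(((fun i => s'' (Fin.append x z i)) = fun i => s (Fin.append x z i)) ∧
        ((fun i => s'' (Fin.append y z i)) = fun i => s' (Fin.append y z i)))) ↔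
    tsat RI
      (fun d : Option Bool => match d with
        | none => ConstD (a + (b + c))
        | some false => IntersectD (a + c)
        | some true => IntersectD (b + c))
      (TForm.exs
        (dar := fun d => match d with
          | none => a + (b + c)
          | some false => (a + c) + (a + c)
          | some true => (b + c) + (b + c))
        (Fin.append p (Fin.append q r))
        (.and (.and (.and
          (.dep none (Fin.append p (Fin.append q r)))
          (.dep (some false) (Fin.append (Fin.append p r) (Fin.append x z))))
          (.dep (some true) (Fin.append (Fin.append q r) (Fin.append y z))))
          (.neq (a + (b + c)) (Fin.append p (Fin.append q r))
            (Fin.append x (Fin.append y z))))) X := by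
  set v : Fin (a + (b + c)) → ℕ := Fin.append p (Fin.append q r) with hv
  have hvp : ∀ j : Fin a, v (Fin.castAdd (b + c) j) = p j := fun j => by
    simp [hv, Fin.append_left]
  have hvq : ∀ j : Fin b, v (Fin.natAdd a (Fin.castAdd c j)) = q j := fun j => by
    simp [hv, Fin.append_right, Fin.append_left]
  have hvr : ∀ j : Fin c, v (Fin.natAdd a (Fin.natAdd b j)) = r j := fun j => by
    simp [hv, Fin.append_right]
  constructor
  · rintro ⟨s, hs, s', hs', hz, hno⟩
    set t : Fin (a + (b + c)) → M :=
      Fin.append (fun i => s (x i)) (Fin.append (fun i => s' (y i)) (fun i => s (z i)))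
      with ht
    have htp : ∀ j : Fin a, t (Fin.castAdd (b + c) j) = s (x j) := fun j => by
      simp [ht, Fin.append_left]
    have htq : ∀ j : Fin b, t (Fin.natAdd a (Fin.castAdd c j)) = s' (y j) := fun j => by
      simp [ht, Fin.append_right, Fin.append_left]
    have htr : ∀ j : Fin c, t (Fin.natAdd a (Fin.natAdd b j)) = s (z j) := fun j => by
      simp [ht, Fin.append_right]
    apply exs_intro _ _ v hinj t
    have hvv : ∀ (s0 : ℕ → M) (i), updT v t s0 (v i) = t i :=
      fun s0 i => updT_v hinj t s0 i
    have hxv : ∀ (s0 : ℕ → M) (j), updT v t s0 (x j) = s0 (x j) :=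
      fun s0 j => updT_not t s0 (fun i => hfx i j)
    have hyv : ∀ (s0 : ℕ → M) (j), updT v t s0 (y j) = s0 (y j) :=
      fun s0 j => updT_not t s0 (fun i => hfy i j)
    have hzv : ∀ (s0 : ℕ → M) (j), updT v t s0 (z j) = s0 (z j) :=
      fun s0 j => updT_not t s0 (fun i => hfz i j)
    refine ⟨⟨⟨?_, ?_⟩, ?_⟩, ?_⟩
    · -- constancy
      rintro tu ⟨e, ⟨s0, hs0, rfl⟩, rfl⟩ tu' ⟨e', ⟨s0', hs0', rfl⟩, rfl⟩
      funext i
      rw [hvv, hvv]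
    · -- ◇(p̄r̄ = x̄z̄)
      refine ⟨fun i => updT v t s (Fin.append (Fin.append p r) (Fin.append x z) i),
        ⟨updT v t s, ⟨s, hs, rfl⟩, rfl⟩, ?_⟩
      funext i
      simp only [Fin.append_left, Fin.append_right]
      induction i using Fin.addCases with
      | left j =>
        rw [Fin.append_left, Fin.append_left, ← hvp j, hvv, htp, hxv]
      | right j =>
        rw [Fin.append_right, Fin.append_right, ← hvr j, hvv, htr, hzv]
    · -- ◇(q̄r̄ = ȳz̄)
      refine ⟨fun i => updT v t s' (Fin.append (Fin.append q r) (Fin.append y z) i),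
        ⟨updT v t s', ⟨s', hs', rfl⟩, rfl⟩, ?_⟩
      funext i
      simp only [Fin.append_left, Fin.append_right]
      induction i using Fin.addCases with
      | left j =>
        rw [Fin.append_left, Fin.append_left, ← hvq j, hvv, htq, hyv]
      | right j =>
        rw [Fin.append_right, Fin.append_right, ← hvr j, hvv, htr, hzv]
        exact congrFun hz j
    · -- inequality
      rintro e ⟨s0, hs0, rfl⟩ heq
      have hx0 : ∀ j, s (x j) = s0 (x j) := fun j => by
        have h := congrFun heq (Fin.castAdd (b + c) j)
        simpa [hvv, htp, Fin.append_left, hxv] using h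
      have hy0 : ∀ j, s' (y j) = s0 (y j) := fun j => by
        have h := congrFun heq (Fin.natAdd a (Fin.castAdd c j))
        simpa [hvv, htq, Fin.append_right, Fin.append_left, hyv] using h
      have hz0 : ∀ j, s (z j) = s0 (z j) := fun j => by
        have h := congrFun heq (Fin.natAdd a (Fin.natAdd b j))
        simpa [hvv, htr, Fin.append_right, hzv] using h
      refine hno s0 hs0 ⟨?_, ?_⟩
      · funext i
        induction i using Fin.addCases with
        | left j => simpa only [Fin.append_left] using (hx0 j).symm
        | right j => simpa only [Fin.append_right] using (hz0 j).symm
      · funext i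
        induction i using Fin.addCases with
        | left j => simpa only [Fin.append_left] using (hy0 j).symm
        | right j =>
          simpa only [Fin.append_right] using ((hz0 j).symm).trans (congrFun hz j)
  · intro h
    obtain ⟨Y, hY, h1, h2⟩ := exs_elim _ _ v _ X h
    obtain ⟨⟨⟨hC, hI1⟩, hI2⟩, hN⟩ := hY
    obtain ⟨tu1, ⟨e1, he1, rfl⟩, heq1⟩ := hI1
    obtain ⟨tu2, ⟨e2, he2, rfl⟩, heq2⟩ := hI2
    have h1x : ∀ j : Fin a, e1 (p j) = e1 (x j) := fun j => by
      have h := congrFun heq1 (Fin.castAdd c j)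
      simpa only [Fin.append_left, Fin.append_right] using h
    have h1z : ∀ j : Fin c, e1 (r j) = e1 (z j) := fun j => by
      have h := congrFun heq1 (Fin.natAdd a j)
      simpa only [Fin.append_left, Fin.append_right] using h
    have h2y : ∀ j : Fin b, e2 (q j) = e2 (y j) := fun j => by
      have h := congrFun heq2 (Fin.castAdd c j)
      simpa only [Fin.append_left, Fin.append_right] using h
    have h2z : ∀ j : Fin c, e2 (r j) = e2 (z j) := fun j => by
      have h := congrFun heq2 (Fin.natAdd b j)
      simpa only [Fin.append_left, Fin.append_right] using h
    have hC12 : ∀ i, e1 (v i) = e2 (v i) := fun i =>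
      congrFun (hC _ ⟨e1, he1, rfl⟩ _ ⟨e2, he2, rfl⟩) i
    obtain ⟨s1, hs1, ha1⟩ := h1 e1 he1
    obtain ⟨s2, hs2, ha2⟩ := h1 e2 he2
    have e1x : ∀ j, e1 (x j) = s1 (x j) := fun j => ha1 (x j) (fun i => hfx i j)
    have e1z : ∀ j, e1 (z j) = s1 (z j) := fun j => ha1 (z j) (fun i => hfz i j)
    have e2y : ∀ j, e2 (y j) = s2 (y j) := fun j => ha2 (y j) (fun i => hfy i j)
    have e2z : ∀ j, e2 (z j) = s2 (z j) := fun j => ha2 (z j) (fun i => hfz i j)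
    have hrz : ∀ j : Fin c, e1 (r j) = e2 (r j) := fun j => by
      have h := hC12 (Fin.natAdd a (Fin.natAdd b j))
      rwa [hvr] at h
    refine ⟨s1, hs1, s2, hs2, ?_, ?_⟩
    · funext j
      rw [← e1z, ← e2z, ← h1z, ← h2z, hrz]
    · rintro s'' hs'' ⟨hxz, hyz⟩
      obtain ⟨e3, he3, ha3⟩ := h2 s'' hs''
      have hC31 : ∀ i, e3 (v i) = e1 (v i) := fun i =>
        congrFun (hC _ ⟨e3, he3, rfl⟩ _ ⟨e1, he1, rfl⟩) i
      have e3x : ∀ j, e3 (x j) = s'' (x j) := fun j => ha3 (x j) (fun i => hfx i j)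
      have e3y : ∀ j, e3 (y j) = s'' (y j) := fun j => ha3 (y j) (fun i => hfy i j)
      have e3z : ∀ j, e3 (z j) = s'' (z j) := fun j => ha3 (z j) (fun i => hfz i j)
      have hsx : ∀ j, s'' (x j) = s1 (x j) := fun j => by
        have h := congrFun hxz (Fin.castAdd c j)
        simpa only [Fin.append_left, Fin.append_right] using h
      have hsz : ∀ j, s'' (z j) = s1 (z j) := fun j => by
        have h := congrFun hxz (Fin.natAdd a j)
        simpa only [Fin.append_left, Fin.append_right] using h
      have hsy : ∀ j, s'' (y j) = s2 (y j) := fun j => by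
        have h := congrFun hyz (Fin.castAdd c j)
        simpa only [Fin.append_left, Fin.append_right] using h
      refine hN e3 he3 ?_
      funext i
      induction i using Fin.addCases with
      | left j =>
        rw [Fin.append_left]
        calc e3 (v (Fin.castAdd (b + c) j)) = e1 (p j) := by rw [hC31, hvp]
          _ = e3 (x j) := by rw [h1x, e1x, ← hsx, ← e3x]
      | right j =>
        induction j using Fin.addCases with
        | left j =>
          rw [Fin.append_right, Fin.append_left]
          calc e3 (v (Fin.natAdd a (Fin.castAdd c j))) = e2 (q j) := by
                rw [hC31, hC12, hvq]
            _ = e3 (y j) := by rw [h2y, e2y, ← hsy, ← e3y]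
        | right j =>
          rw [Fin.append_right, Fin.append_right]
          calc e3 (v (Fin.natAdd a (Fin.natAdd b j))) = e1 (r j) := by rw [hC31, hvr]
            _ = e3 (z j) := by rw [h1z, e1z, ← hsz, ← e3z]
end
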